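/- Let φ : [0,∞) → ℝ be of class C^n for a fixed positive integer n. Then ∑_{k=0}^n (-1)^k (n choose k) φ(x + k t) ≥ 0 for all x, t ≥ 0 if and only if (-1)^n φ^(n)(x) ≥ 0 for all x ≥ 0. -/

import Mathlib

open Finset Set fwdDiff

private lemma fwdDiff_iter_neg' (t : ℝ) (f : ℝ → ℝ) (n : ℕ) (x : ℝ) :
    (Δ_[t])^[n] (fun y => -f y) x = -((Δ_[t])^[n] f x) := by
  induction n generalizing x with
  | zero => simp
  | succ n ih =>
    rw [Function.iterate_succ_apply', Function.iterate_succ_apply']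
    simp only [fwdDiff, ih]
    ring

private lemma iteratedDeriv_sub' {n : ℕ} {f g : ℝ → ℝ} (hf : ContDiff ℝ n f)
    (hg : ContDiff ℝ n g) (x : ℝ) :
    iteratedDeriv n (fun y => f y - g y) x = iteratedDeriv n f x - iteratedDeriv n g x := by
  have h : (fun y => f y - g y) = f - g := rfl
  rw [h, ← iteratedDerivWithin_univ, ← iteratedDerivWithin_univ, ← iteratedDerivWithin_univ,
    iteratedDerivWithin_sub (Set.mem_univ x) uniqueDiffOn_univ hf.contDiffAt.contDiffWithinAt hg.contDiffAt.contDiffWithinAt]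

private lemma sum_eq_fwdDiff (n : ℕ) (φ : ℝ → ℝ) (x t : ℝ) :
    ∑ k ∈ Finset.range (n + 1), (-1 : ℝ) ^ k * (n.choose k : ℝ) * φ (x + k * t)
      = (-1 : ℝ) ^ n * (Δ_[t])^[n] φ x := by
  rw [fwdDiff_iter_eq_sum_shift, Finset.mul_sum]
  refine Finset.sum_congr rfl fun k hk => ?_
  rw [Finset.mem_range, Nat.lt_succ_iff] at hk
  rw [zsmul_eq_mul, nsmul_eq_mul]
  push_cast
  have hp : (-1 : ℝ) ^ n * (-1 : ℝ) ^ (n - k) = (-1) ^ k := by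
    rw [← pow_add]
    have h : n + (n - k) = 2 * (n - k) + k := by omega
    rw [h, pow_add, pow_mul, neg_one_sq, one_pow, one_mul]
  rw [← mul_assoc, ← mul_assoc, hp]

private lemma keyNonneg : ∀ (n : ℕ) (φ : ℝ → ℝ), ContDiff ℝ n φ → ∀ x t : ℝ, 0 ≤ t →
    (∀ y ∈ Set.Icc x (x + n * t), 0 ≤ (-1 : ℝ) ^ n * iteratedDeriv n φ y) →
    0 ≤ (-1 : ℝ) ^ n * (Δ_[t])^[n] φ x := by
  intro n
  induction n with
  | zero =>
    intro φ _ x t _ hder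
    simpa using hder x (by simp)
  | succ n ih =>
    intro φ hφ x t ht hder
    push_cast at hder
    set ψ : ℝ → ℝ := fun y => φ y - φ (y + t) with hψdef
    have hφn : ContDiff ℝ n φ := hφ.of_le (by exact_mod_cast Nat.le_succ n)
    have hshift : ContDiff ℝ n (fun y => φ (y + t)) :=
      hφn.comp (contDiff_id.add contDiff_const)
    have hψ : ContDiff ℝ n ψ := hφn.sub hshift
    have hDdiff : Differentiable ℝ (iteratedDeriv n φ) :=
      hφ.differentiable_iteratedDeriv n (by exact_mod_cast n.lt_succ_self)
    have hg : AntitoneOn (fun y => (-1 : ℝ) ^ n * iteratedDeriv n φ y)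
        (Set.Icc x (x + ((n : ℝ) + 1) * t)) := by
      apply antitoneOn_of_deriv_nonpos (convex_Icc _ _)
      · exact ((hDdiff.const_mul _).continuous).continuousOn
      · exact (hDdiff.const_mul _).differentiableOn
      · intro y hy
        have hd : deriv (fun y => (-1 : ℝ) ^ n * iteratedDeriv n φ y) y
            = (-1 : ℝ) ^ n * iteratedDeriv (n + 1) φ y := by
          rw [deriv_const_mul _ (hDdiff y), ← iteratedDeriv_succ]
        rw [hd]
        have h1 := hder y (interior_subset hy)
        have hpow : (-1 : ℝ) ^ (n + 1) = -(-1 : ℝ) ^ n := by rw [pow_succ]; ring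
        rw [hpow] at h1
        linarith
    have hψder : ∀ y ∈ Set.Icc x (x + n * t), 0 ≤ (-1 : ℝ) ^ n * iteratedDeriv n ψ y := by
      intro y hy
      have hn0 : (0 : ℝ) ≤ n * t := by positivity
      have h1 : y ∈ Set.Icc x (x + ((n : ℝ) + 1) * t) := ⟨hy.1, by nlinarith [hy.2]⟩
      have h2 : y + t ∈ Set.Icc x (x + ((n : ℝ) + 1) * t) :=
        ⟨by linarith [hy.1], by nlinarith [hy.2]⟩
      have h3 := hg h1 h2 (by linarith)
      have h4 : iteratedDeriv n ψ y = iteratedDeriv n φ y - iteratedDeriv n φ (y + t) := by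
        rw [hψdef, iteratedDeriv_sub' hφn hshift]
        congr 1
        exact congrFun (iteratedDeriv_comp_add_const n φ t) y
      rw [h4, mul_sub]
      simp only at h3
      linarith
    have hmain := ih ψ hψ x t ht hψder
    have hiter : (Δ_[t])^[n + 1] φ x = -((Δ_[t])^[n] ψ x) := by
      rw [Function.iterate_succ_apply, ← fwdDiff_iter_neg' t ψ n x]
      have he : Δ_[t] φ = fun y => -ψ y := by
        funext y
        show φ (y + t) - φ y = -(φ y - φ (y + t))
        ring
      rw [he]
    rw [hiter]
    have h5 : (-1 : ℝ) ^ (n + 1) * -((Δ_[t])^[n] ψ x) = (-1 : ℝ) ^ n * (Δ_[t])^[n] ψ x := by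
      rw [pow_succ]; ring
    rw [h5]
    exact hmain

private lemma keyStrict : ∀ (n : ℕ) (φ : ℝ → ℝ), ContDiff ℝ n φ → ∀ x t : ℝ, 0 < t →
    (∀ y ∈ Set.Icc x (x + n * t), 0 < (-1 : ℝ) ^ n * iteratedDeriv n φ y) →
    0 < (-1 : ℝ) ^ n * (Δ_[t])^[n] φ x := by
  intro n
  induction n with
  | zero =>
    intro φ _ x t _ hder
    simpa using hder x (by simp)
  | succ n ih =>
    intro φ hφ x t ht hder
    push_cast at hder
    set ψ : ℝ → ℝ := fun y => φ y - φ (y + t) with hψdef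
    have hφn : ContDiff ℝ n φ := hφ.of_le (by exact_mod_cast Nat.le_succ n)
    have hshift : ContDiff ℝ n (fun y => φ (y + t)) :=
      hφn.comp (contDiff_id.add contDiff_const)
    have hψ : ContDiff ℝ n ψ := hφn.sub hshift
    have hDdiff : Differentiable ℝ (iteratedDeriv n φ) :=
      hφ.differentiable_iteratedDeriv n (by exact_mod_cast n.lt_succ_self)
    have hg : StrictAntiOn (fun y => (-1 : ℝ) ^ n * iteratedDeriv n φ y)
        (Set.Icc x (x + ((n : ℝ) + 1) * t)) := by
      apply strictAntiOn_of_deriv_neg (convex_Icc _ _)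
      · exact ((hDdiff.const_mul _).continuous).continuousOn
      · intro y hy
        have hd : deriv (fun y => (-1 : ℝ) ^ n * iteratedDeriv n φ y) y
            = (-1 : ℝ) ^ n * iteratedDeriv (n + 1) φ y := by
          rw [deriv_const_mul _ (hDdiff y), ← iteratedDeriv_succ]
        rw [hd]
        have h1 := hder y (interior_subset hy)
        have hpow : (-1 : ℝ) ^ (n + 1) = -(-1 : ℝ) ^ n := by rw [pow_succ]; ring
        rw [hpow] at h1
        linarith
    have hψder : ∀ y ∈ Set.Icc x (x + n * t), 0 < (-1 : ℝ) ^ n * iteratedDeriv n ψ y := by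
      intro y hy
      have hn0 : (0 : ℝ) ≤ n * t := by positivity
      have h1 : y ∈ Set.Icc x (x + ((n : ℝ) + 1) * t) := ⟨hy.1, by nlinarith [hy.2]⟩
      have h2 : y + t ∈ Set.Icc x (x + ((n : ℝ) + 1) * t) :=
        ⟨by linarith [hy.1], by nlinarith [hy.2]⟩
      have h3 := hg h1 h2 (by linarith)
      have h4 : iteratedDeriv n ψ y = iteratedDeriv n φ y - iteratedDeriv n φ (y + t) := by
        rw [hψdef, iteratedDeriv_sub' hφn hshift]
        congr 1
        exact congrFun (iteratedDeriv_comp_add_const n φ t) y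
      rw [h4, mul_sub]
      simp only at h3
      linarith
    have hmain := ih ψ hψ x t ht hψder
    have hiter : (Δ_[t])^[n + 1] φ x = -((Δ_[t])^[n] ψ x) := by
      rw [Function.iterate_succ_apply, ← fwdDiff_iter_neg' t ψ n x]
      have he : Δ_[t] φ = fun y => -ψ y := by
        funext y
        show φ (y + t) - φ y = -(φ y - φ (y + t))
        ring
      rw [he]
    rw [hiter]
    have h5 : (-1 : ℝ) ^ (n + 1) * -((Δ_[t])^[n] ψ x) = (-1 : ℝ) ^ n * (Δ_[t])^[n] ψ x := by
      rw [pow_succ]; ring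
    rw [h5]
    exact hmain

theorem finite_difference_sign_iff_derivative_sign
    (n : ℕ) (hn : 1 ≤ n) (φ : ℝ → ℝ) (hCn : ContDiff ℝ n φ) :
    (∀ x ≥ (0:ℝ), ∀ t ≥ (0:ℝ),
        0 ≤ ∑ k ∈ Finset.range (n + 1),
          (-1 : ℝ) ^ k * (n.choose k : ℝ) * φ (x + k * t)) ↔
    (∀ x ≥ (0:ℝ), 0 ≤ (-1 : ℝ) ^ n * iteratedDeriv n φ x) := by
  constructor
  · intro hsum x hx
    by_contra hneg
    push_neg at hneg
    have hcont : Continuous fun y => (-1 : ℝ) ^ n * iteratedDeriv n φ y :=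
      continuous_const.mul (hCn.continuous_iteratedDeriv n le_rfl)
    have hopen : IsOpen {y : ℝ | (-1 : ℝ) ^ n * iteratedDeriv n φ y < 0} :=
      isOpen_lt hcont continuous_const
    obtain ⟨ε, hε, hball⟩ := Metric.mem_nhds_iff.mp (hopen.mem_nhds hneg)
    have hn' : (0 : ℝ) < n := by exact_mod_cast hn
    set t : ℝ := ε / (2 * n) with htdef
    have ht : 0 < t := by positivity
    have hnt : (n : ℝ) * t = ε / 2 := by
      rw [htdef]; field_simp
    have hsub : ∀ y ∈ Set.Icc x (x + n * t), (-1 : ℝ) ^ n * iteratedDeriv n φ y < 0 := by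
      intro y hy
      apply hball
      rw [Metric.mem_ball, Real.dist_eq, abs_sub_lt_iff]
      constructor
      · have := hy.2; rw [hnt] at this; linarith
      · linarith [hy.1]
    have hstrict := keyStrict n (fun y => -(φ y)) hCn.neg x t ht ?_
    · have hs := hsum x hx t ht.le
      rw [sum_eq_fwdDiff] at hs
      rw [fwdDiff_iter_neg', mul_neg] at hstrict
      linarith
    · intro y hy
      rw [show (fun y => -φ y) = -φ from rfl, iteratedDeriv_neg, mul_neg]
      linarith [hsub y hy]
  · intro hder x hx t ht
    rw [sum_eq_fwdDiff]
    exact keyNonneg n φ hCn x t ht (fun y hy => hder y (le_trans hx hy.1))
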